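/- In an ADMG, let X_i be a vertex and S a set of vertices not containing X_i. Partition S into S_1 = {X_k ∈ S : S \ {X_k} unblocks some back-door path from X_k to X_i} and S_2 = S \ S_1. Then for any X_p ∈ S_1, X_q ∈ S_2, and X_l ∈ V \ S, there is no configuration consisting of a directed path from X_l to X_q unblocked by S_1 together with a directed path from X_l to X_p unblocked by S_2 (treks out of a common source connecting S_2 to S_1 avoiding S are impossible). -/

import Mathlib

open scoped Classical

/-- Orientation of an edge along a path. -/
inductive EdgeDir
  | fwd  -- a → b
  | bwd  -- a ← b
  | bi   -- a ↔ b
deriving DecidableEq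

/-- An acyclic directed mixed graph: directed and bidirected edges on a vertex set. -/
structure ADMG (V : Type) where
  dir : V → V → Prop
  bidir : V → V → Prop

namespace ADMG

variable {V : Type} (G : ADMG V)

/-- `StepOK d a b` : the step from `a` to `b` along a path realizes the edge type `d`. -/
def StepOK : EdgeDir → V → V → Prop
  | .fwd, a, b => G.dir a b
  | .bwd, a, b => G.dir b a
  | .bi,  a, b => G.bidir a b

/-- A path in a mixed graph: a list of distinct vertices together with the orientation of
each consecutive edge. -/
structure GPath where
  verts : List V
  dirs : List EdgeDir
  hlen : verts.length = dirs.length + 1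
  nodup : verts.Nodup
  ok : ∀ k (h : k < dirs.length),
    G.StepOK (dirs.get ⟨k, h⟩) (verts.get ⟨k, by omega⟩) (verts.get ⟨k + 1, by omega⟩)

variable {G}

/-- First vertex of a path. -/
def GPath.first (p : G.GPath) : V := p.verts.get ⟨0, by have := p.hlen; omega⟩

/-- Last vertex of a path. -/
def GPath.last (p : G.GPath) : V :=
  p.verts.get ⟨p.dirs.length, by have := p.hlen; omega⟩

/-- The vertex at position `k` is a collider (both adjacent edges point into it). -/
def GPath.ColliderAt (p : G.GPath) (k : ℕ) : Prop :=
  ∃ (hk : 0 < k) (h : k < p.dirs.length),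
    (p.dirs.get ⟨k - 1, by omega⟩ = .fwd ∨ p.dirs.get ⟨k - 1, by omega⟩ = .bi) ∧
    (p.dirs.get ⟨k, h⟩ = .bwd ∨ p.dirs.get ⟨k, h⟩ = .bi)

/-- `b` is a descendant of `a` (there is a directed path from `a` to `b`). -/
def Desc (G : ADMG V) (a b : V) : Prop := Relation.TransGen G.dir a b

/-- `Z` blocks a path: either `Z` contains an interior non-collider, or some collider on
the path is such that neither it nor any of its descendants belongs to `Z`. -/
def Blocks (Z : Set V) (p : G.GPath) : Prop :=
  (∃ k, ∃ _hk : 0 < k, ∃ h : k < p.dirs.length,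
      ¬ p.ColliderAt k ∧ p.verts.get ⟨k, by have := p.hlen; omega⟩ ∈ Z)
  ∨ (∃ k, ∃ h : k < p.dirs.length, p.ColliderAt k ∧
      p.verts.get ⟨k, by have := p.hlen; omega⟩ ∉ Z ∧
      ∀ d, Desc G (p.verts.get ⟨k, by have := p.hlen; omega⟩) d → d ∉ Z)

/-- The path runs from `a` to `b`. -/
def GPath.IsBetween (p : G.GPath) (a b : V) : Prop := p.first = a ∧ p.last = b

/-- A directed path from `a` to `b` (all edges oriented forward, nonempty). -/
def GPath.IsDirected (p : G.GPath) (a b : V) : Prop :=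
  p.first = a ∧ p.last = b ∧ p.dirs ≠ [] ∧
    ∀ k (h : k < p.dirs.length), p.dirs.get ⟨k, h⟩ = .fwd

/-- A back-door path from `a` to `b` (first edge points into `a` or is bidirected). -/
def GPath.IsBackdoor (p : G.GPath) (a b : V) : Prop :=
  p.first = a ∧ p.last = b ∧ ∃ h : 0 < p.dirs.length,
    (p.dirs.get ⟨0, h⟩ = .bwd ∨ p.dirs.get ⟨0, h⟩ = .bi)

/-- The path contains a v-structure. -/
def GPath.HasCollider (p : G.GPath) : Prop := ∃ k, p.ColliderAt k

/-- The selective-door criterion relative to `(j, i)`. -/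
def SelectiveDoor (G : ADMG V) (Z : Set V) (j i : V) : Prop :=
  (∀ k ∈ Z, Desc G j k →
      (∃ q : G.GPath, q.IsDirected j k ∧ ¬ Blocks ((Z ∪ {j}) \ {k}) q) →
      ∀ p : G.GPath, p.IsBackdoor k i → Blocks (Z \ {k}) p)
  ∧ (∀ p : G.GPath, p.IsBackdoor j i → Blocks Z p)

/-- The back-door criterion relative to `(j, i)`. -/
def BackdoorCrit (G : ADMG V) (Z : Set V) (j i : V) : Prop :=
  (∀ k ∈ Z, ¬ Desc G j k) ∧ ∀ p : G.GPath, p.IsBackdoor j i → Blocks Z p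

-- ===== new infrastructure =====

/-- ancestor-of-Z condition -/
def AnStar (G : ADMG V) (Z : Set V) (v : V) : Prop :=
  v ∈ Z ∨ ∃ d, Desc G v d ∧ d ∈ Z

/-- collider condition purely in terms of a dirs list -/
def CC (es : List EdgeDir) (k : ℕ) : Prop :=
  ∃ _h1 : 0 < k, ∃ h2 : k < es.length,
    (es[k-1]'(by omega) = .fwd ∨ es[k-1]'(by omega) = .bi) ∧
    (es[k] = .bwd ∨ es[k] = .bi)

lemma colliderAt_iff (p : G.GPath) (k : ℕ) : p.ColliderAt k ↔ CC p.dirs k := by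
  constructor
  · rintro ⟨h1, h2, ha, hb⟩; exact ⟨h1, h2, ha, hb⟩
  · rintro ⟨h1, h2, ha, hb⟩; exact ⟨h1, h2, ha, hb⟩

lemma notBlocks_iff (Z : Set V) (p : G.GPath) :
    ¬ Blocks Z p ↔ ∀ k, 0 < k → ∀ h : k < p.dirs.length,
      (¬ p.ColliderAt k → p.verts[k]'(by have := p.hlen; omega) ∉ Z) ∧
      (p.ColliderAt k → AnStar G Z (p.verts[k]'(by have := p.hlen; omega))) := by
  unfold Blocks AnStar
  constructor
  · intro hnb k hk h
    constructor
    · intro hnc hmem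
      exact hnb (Or.inl ⟨k, hk, h, hnc, hmem⟩)
    · intro hc
      by_contra hcon
      push_neg at hcon
      exact hnb (Or.inr ⟨k, h, hc, hcon.1, fun d hd => hcon.2 d hd⟩)
  · rintro H (⟨k, hk, h, hnc, hmem⟩ | ⟨k, h, hc, hnm, hdesc⟩)
    · exact (H k hk h).1 hnc hmem
    · rcases (H k (hc.1) h).2 hc with hin | ⟨d, hd, hdz⟩
      · exact hnm hin
      · exact hdesc d hd hdz

lemma gpath_ne_get {p : G.GPath} {s t : ℕ} (hs : s < p.verts.length) (ht : t < p.verts.length)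
    (hne : s ≠ t) : p.verts[s] ≠ p.verts[t] := by
  intro h
  exact hne ((List.Nodup.getElem_inj_iff p.nodup).1 h)

/-- all vertices on a chain are the head or descendants of the head -/
lemma chain_desc : ∀ (m : List V), m.Chain' G.dir → ∀ (hm : m ≠ []) v, v ∈ m →
    v = m[0]'(by cases m <;> simp_all) ∨ Desc G (m[0]'(by cases m <;> simp_all)) v := by
  intro m
  induction m with
  | nil => intro _ _ v hv; simp at hv
  | cons a rest ih =>
    intro hc _ v hv
    rcases List.mem_cons.1 hv with rfl | hv
    · left; rfl
    · right
      have hrest : rest ≠ [] := by rintro rfl; simp at hv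
      obtain ⟨b, rest', rfl⟩ : ∃ b rest', rest = b :: rest' := by
        cases rest with | nil => simp at hrest | cons b r => exact ⟨b, r, rfl⟩
      have hab : G.dir a b := (List.isChain_cons_cons.1 hc).1
      have hc' : List.Chain' G.dir (b :: rest') := (List.isChain_cons_cons.1 hc).2
      rcases ih hc' (by simp) v hv with h | h
      · simp at h; subst h; exact Relation.TransGen.single hab
      · simp at h; exact Relation.TransGen.head hab h

/-- Desc gives a chain list -/
lemma desc_to_chain {a b : V} (h : Desc G a b) :
    ∃ m : List V, ∃ hl : 2 ≤ m.length, m[0]'(by omega) = a ∧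
      m[m.length - 1]'(by omega) = b ∧ m.Chain' G.dir := by
  induction h using Relation.TransGen.head_induction_on with
  | @single a' hab => exact ⟨[a', b], by norm_num, rfl, rfl, List.isChain_pair.2 hab⟩
  | @head a' c hac ht iht =>
    obtain ⟨m, hl, hm0, hml, hmc⟩ := iht
    have hm : m ≠ [] := by intro h; subst h; simp at hl
    refine ⟨a' :: m, by simp only [List.length_cons]; omega, rfl, ?_, ?_⟩
    · have h1 : (a' :: m).length - 1 = (m.length - 1) + 1 := by simp only [List.length_cons]; omega
      have : (a' :: m)[(a' :: m).length - 1]'(by simp only [List.length_cons]; omega) =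
          (a' :: m)[(m.length - 1) + 1]'(by simp only [List.length_cons]; omega) := by
        congr 1
      rw [this, List.getElem_cons_succ]
      exact hml
    · show List.IsChain _ _
      rw [List.isChain_cons]
      refine ⟨?_, hmc⟩
      intro y hy
      rw [List.head?_eq_head hm] at hy
      simp only [Option.mem_def, Option.some.injEq] at hy
      subst hy
      have h0 : m[0]'(by omega) = m.head hm := List.getElem_zero _
      rw [h0] at hm0
      rw [hm0]
      exact hac

lemma chain'_iff_getElem' {α : Type*} (R : α → α → Prop) (l : List α) :
    l.Chain' R ↔ ∀ k (h : k + 1 < l.length), R (l[k]'(by omega)) (l[k+1]'h) := by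
  show List.IsChain _ _ ↔ _
  rw [List.isChain_iff_getElem]

set_option maxHeartbeats 2000000 in
lemma desc_to_path {a b : V} (h : Desc G a b) (hab : a ≠ b) :
    ∃ m : List V, ∃ hl : 2 ≤ m.length, m[0]'(by omega) = a ∧
      m[m.length - 1]'(by omega) = b ∧ m.Chain' G.dir ∧ m.Nodup := by
  obtain ⟨m0, hl0, h00, h0l, h0c⟩ := desc_to_chain h
  have hP : ∃ n, ∃ m : List V, m.length = n ∧ ∃ hl : 2 ≤ m.length,
      m[0]'(by omega) = a ∧ m[m.length - 1]'(by omega) = b ∧ m.Chain' G.dir :=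
    ⟨m0.length, m0, rfl, hl0, h00, h0l, h0c⟩
  classical
  obtain ⟨m, hmn, hl, hm0, hml, hmc⟩ := Nat.find_spec hP
  refine ⟨m, hl, hm0, hml, hmc, ?_⟩
  by_contra hnd
  have hdup : ∃ i j : ℕ, ∃ hi : i < m.length, ∃ hj : j < m.length,
      i < j ∧ m[i] = m[j] := by
    rw [List.nodup_iff_injective_get] at hnd
    unfold Function.Injective at hnd
    push_neg at hnd
    obtain ⟨⟨i, hi⟩, ⟨j, hj⟩, heq, hne⟩ := hnd
    simp only [List.get_eq_getElem] at heq
    rcases Nat.lt_or_ge i j with hlt | hge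
    · exact ⟨i, j, hi, hj, hlt, heq⟩
    · have hlt : j < i := by
        rcases Nat.eq_or_lt_of_le hge with h | h
        · exact absurd (by exact Fin.ext h.symm) hne
        · exact h
      exact ⟨j, i, hj, hi, hlt, heq.symm⟩
  obtain ⟨i, j, hi, hj, hij, heq⟩ := hdup
  have hlen' : (m.take (i+1) ++ m.drop (j+1)).length = (i + 1) + (m.length - (j + 1)) := by
    simp; omega
  have hget1 : ∀ k (h : k < i + 1), (m.take (i+1) ++ m.drop (j+1))[k]'(by omega) = m[k]'(by omega) := by
    intro k h
    rw [List.getElem_append_left (by simp; omega)]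
    simp [List.getElem_take]
  have hget2 : ∀ k (h : i + 1 ≤ k) (h2 : k < (m.take (i+1) ++ m.drop (j+1)).length),
      (m.take (i+1) ++ m.drop (j+1))[k]'h2 = m[j + 1 + (k - (i+1))]'(by simp at h2; omega) := by
    intro k h h2
    rw [List.getElem_append_right (by simp; omega)]
    simp only [List.getElem_drop]
    congr 2
    simp
    omega
  have hshort : (m.take (i+1) ++ m.drop (j+1)).length < m.length := by rw [hlen']; omega
  have hl' : 2 ≤ (m.take (i+1) ++ m.drop (j+1)).length := by
    rw [hlen']
    by_contra hcon
    push_neg at hcon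
    have hi0 : i = 0 := by omega
    have hjl : j = m.length - 1 := by omega
    have e1 : m[j]'hj = m[m.length - 1]'(by omega) := by congr 1
    have e0 : m[i]'hi = m[0]'(by omega) := by congr 1
    rw [e1, hml] at heq
    rw [e0, hm0] at heq
    exact hab heq
  have h0' : (m.take (i+1) ++ m.drop (j+1))[0]'(by omega) = a := by
    rw [hget1 0 (by omega)]; exact hm0
  have hl'' : (m.take (i+1) ++ m.drop (j+1))[(m.take (i+1) ++ m.drop (j+1)).length - 1]'(by omega) = b := by
    rcases Nat.lt_or_ge (j + 1) m.length with hlt | hge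
    · rw [hget2 ((m.take (i+1) ++ m.drop (j+1)).length - 1) (by omega) (by omega)]
      have e : m[j + 1 + ((m.take (i+1) ++ m.drop (j+1)).length - 1 - (i+1))]'(by omega)
          = m[m.length - 1]'(by omega) := by congr 1; omega
      rw [e]; exact hml
    · have : (m.take (i+1) ++ m.drop (j+1)).length - 1 = i := by omega
      rw [hget1 ((m.take (i+1) ++ m.drop (j+1)).length - 1) (by omega)]
      have e : m[(m.take (i+1) ++ m.drop (j+1)).length - 1]'(by omega) = m[i]'hi := by congr 1
      rw [e, heq]
      have e2 : m[j]'hj = m[m.length - 1]'(by omega) := by congr 1; omega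
      rw [e2]; exact hml
  have hc' : (m.take (i+1) ++ m.drop (j+1)).Chain' G.dir := by
    rw [chain'_iff_getElem']
    intro k hk
    have hcm := (chain'_iff_getElem' G.dir m).1 hmc
    rcases Nat.lt_or_ge (k+1) (i+1) with h1 | h1
    · rw [hget1 k (by omega), hget1 (k+1) (by omega)]
      exact hcm k (by omega)
    · rcases Nat.lt_or_ge k (i+1) with h2 | h2
      · have hki : k = i := by omega
        rw [hget1 k (by omega), hget2 (k+1) (by omega) (by omega)]
        have e1 : m[k]'(by omega) = m[j]'hj := by
          have ei : m[k]'(by omega) = m[i]'hi := by congr 1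
          rw [ei, heq]
        have e2 : m[j + 1 + (k + 1 - (i+1))]'(by rw [hlen'] at hk; omega) = m[j+1]'(by rw [hlen'] at hk; omega) := by
          congr 1; omega
        rw [e1, e2]
        exact hcm j (by rw [hlen'] at hk; omega)
      · rw [hget2 k h2 (by omega), hget2 (k+1) (by omega) (by omega)]
        have e2 : m[j + 1 + (k + 1 - (i+1))]'(by rw [hlen'] at hk; omega)
            = m[(j + 1 + (k - (i+1))) + 1]'(by rw [hlen'] at hk; omega) := by
          congr 1; omega
        rw [e2]
        exact hcm (j + 1 + (k - (i+1))) (by rw [hlen'] at hk; omega)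
  exact Nat.find_min hP (by omega) ⟨m.take (i+1) ++ m.drop (j+1), rfl, hl', h0', hl'', hc'⟩

lemma fwd_desc (p : G.GPath) (hfwd : ∀ k (h : k < p.dirs.length), p.dirs.get ⟨k, h⟩ = .fwd)
    {s t : ℕ} (hst : s < t) (ht : t ≤ p.dirs.length) :
    Desc G (p.verts[s]'(by have := p.hlen; omega)) (p.verts[t]'(by have := p.hlen; omega)) := by
  induction t with
  | zero => omega
  | succ t ih =>
    have hstep : G.dir (p.verts[t]'(by have := p.hlen; omega))
        (p.verts[t+1]'(by have := p.hlen; omega)) := by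
      have h := p.ok t (by omega)
      rw [hfwd t (by omega)] at h
      exact h
    rcases Nat.lt_or_ge s t with h | h
    · exact Relation.TransGen.tail (ih h (by omega)) hstep
    · have hseq : s = t := by omega
      subst hseq
      exact Relation.TransGen.single hstep

lemma gidx {α : Type*} (l : List α) {i j : ℕ} (h : i = j) (hi : i < l.length) :
    l[i]'hi = l[j]'(h ▸ hi) := by subst h; rfl

set_option maxHeartbeats 4000000 in
lemma glue (Z : Set V) (w i : V) (π : G.GPath) (hπi : π.last = i)
    (t : ℕ) (ht : t ≤ π.dirs.length)
    (F : List V) (ds : List EdgeDir) (hFds : ds.length = F.length)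
    (hstep : ∀ j (hj : j + 1 < F.length),
      G.StepOK (ds[j]'(by omega)) (F[j]'(by omega)) (F[j+1]'hj))
    (hstepLast : ∀ _hF : 0 < F.length, G.StepOK (ds[F.length - 1]'(by omega))
      (F[F.length - 1]'(by omega)) (π.verts[t]'(by have := π.hlen; omega)))
    (hH1 : ∀ j, 0 < j → ∀ hj : j < F.length,
      (ds[j-1]'(by omega) = .bwd ∨ ds[j]'(by omega) = .fwd) ∧ F[j]'hj ∉ Z)
    (hJ : ∀ _hF : 0 < F.length, ∀ htn : t < π.dirs.length,
      ((π.dirs[t]'htn = .bwd ∨ π.dirs[t]'htn = .bi) → ds[F.length-1]'(by omega) ≠ .bwd →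
        AnStar G Z (π.verts[t]'(by have := π.hlen; omega))) ∧
      ((π.verts[t]'(by have := π.hlen; omega)) ∈ Z →
        (π.dirs[t]'htn = .bwd ∨ π.dirs[t]'htn = .bi) ∧ ds[F.length-1]'(by omega) ≠ .bwd))
    (hH3 : ∀ s, t < s → ∀ hs : s < π.dirs.length,
      (π.ColliderAt s → AnStar G Z (π.verts[s]'(by have := π.hlen; omega))) ∧
      (¬ π.ColliderAt s → (π.verts[s]'(by have := π.hlen; omega)) ∉ Z))
    (hwF : ∀ _hF : 0 < F.length, F[0]'(by omega) = w)
    (hwE : F.length = 0 → π.verts[t]'(by have := π.hlen; omega) = w)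
    (hbdF : ∀ _hF : 0 < F.length, ds[0]'(by omega) = .bwd)
    (hbdE : F.length = 0 → ∀ htn : t < π.dirs.length,
      (π.dirs[t]'htn = .bwd ∨ π.dirs[t]'htn = .bi))
    (hne : 0 < F.length ∨ t < π.dirs.length)
    (hnd : (F ++ π.verts.drop t).Nodup) :
    ∃ σ : G.GPath, σ.IsBackdoor w i ∧ ¬ Blocks Z σ := by
  have hπlen := π.hlen
  have hvslen : (F ++ π.verts.drop t).length = F.length + (π.dirs.length + 1 - t) := by
    simp; omega
  have heslen : (ds ++ π.dirs.drop t).length = F.length + (π.dirs.length - t) := by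
    simp; omega
  have ev1 : ∀ j (hj : j < F.length), (F ++ π.verts.drop t)[j]'(by rw [hvslen]; omega) = F[j]'hj := by
    intro j hj
    exact List.getElem_append_left hj
  have ev2 : ∀ s (hs : s < π.dirs.length + 1 - t),
      (F ++ π.verts.drop t)[F.length + s]'(by rw [hvslen]; omega) = π.verts[t+s]'(by omega) := by
    intro s hs
    rw [List.getElem_append_right (by omega)]
    simp only [List.getElem_drop]
    congr 2
    omega
  have ee1 : ∀ j (hj : j < F.length), (ds ++ π.dirs.drop t)[j]'(by rw [heslen]; omega) = ds[j]'(by omega) := by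
    intro j hj
    exact List.getElem_append_left (by omega)
  have ee2 : ∀ s (hs : s < π.dirs.length - t),
      (ds ++ π.dirs.drop t)[F.length + s]'(by rw [heslen]; omega) = π.dirs[t+s]'(by omega) := by
    intro s hs
    rw [List.getElem_append_right (by omega)]
    simp only [List.getElem_drop]
    congr 2
    omega
  have hlen' : (F ++ π.verts.drop t).length = (ds ++ π.dirs.drop t).length + 1 := by
    rw [hvslen, heslen]; omega
  have hok : ∀ k (h : k < (ds ++ π.dirs.drop t).length),
      G.StepOK ((ds ++ π.dirs.drop t)[k]'h)
        ((F ++ π.verts.drop t)[k]'(by rw [hvslen]; rw [heslen] at h; omega))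
        ((F ++ π.verts.drop t)[k+1]'(by rw [hvslen]; rw [heslen] at h; omega)) := by
    intro k h
    rw [heslen] at h
    rcases Nat.lt_or_ge (k+1) F.length with h1 | h1
    · rw [ee1 k (by omega), ev1 k (by omega), ev1 (k+1) h1]
      exact hstep k h1
    · rcases Nat.lt_or_ge k F.length with h2 | h2
      · -- k + 1 = F.length
        have hk1 : k = F.length - 1 := by omega
        have e1 : (ds ++ π.dirs.drop t)[k]'(by rw [heslen]; omega) = ds[F.length - 1]'(by omega) := by
          rw [ee1 k (by omega)]; congr 1
        have e2 : (F ++ π.verts.drop t)[k]'(by rw [hvslen]; omega) = F[F.length - 1]'(by omega) := by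
          rw [ev1 k (by omega)]; congr 1
        have e3 : (F ++ π.verts.drop t)[k+1]'(by rw [hvslen]; omega) = π.verts[t]'(by omega) := by
          rw [gidx _ (show k + 1 = F.length + 0 by omega), ev2 0 (by omega)]
          congr 1
        rw [e1, e2, e3]
        exact hstepLast (by omega)
      · -- π part
        have e1 : (ds ++ π.dirs.drop t)[k]'(by rw [heslen]; omega)
            = π.dirs[t + (k - F.length)]'(by omega) := by
          rw [gidx _ (show k = F.length + (k - F.length) by omega), ee2 (k - F.length) (by omega)]
        have e2 : (F ++ π.verts.drop t)[k]'(by rw [hvslen]; omega)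
            = π.verts[t + (k - F.length)]'(by omega) := by
          rw [gidx _ (show k = F.length + (k - F.length) by omega), ev2 (k - F.length) (by omega)]
        have e3 : (F ++ π.verts.drop t)[k+1]'(by rw [hvslen]; omega)
            = π.verts[(t + (k - F.length)) + 1]'(by omega) := by
          rw [gidx _ (show k + 1 = F.length + (k + 1 - F.length) by omega), ev2 (k + 1 - F.length) (by omega)]
          congr 1
          omega
        rw [e1, e2, e3]
        have := π.ok (t + (k - F.length)) (by omega)
        simpa [List.get_eq_getElem] using this
  refine ⟨⟨F ++ π.verts.drop t, ds ++ π.dirs.drop t, hlen', hnd,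
    fun k h => by simpa [List.get_eq_getElem] using hok k h⟩, ⟨?_, ?_, ?_⟩, ?_⟩
  · -- first = w
    show (F ++ π.verts.drop t)[0]'_ = w
    rcases Nat.eq_zero_or_pos F.length with hF | hF
    · rw [gidx _ (show (0:ℕ) = F.length + 0 by omega), ev2 0 (by omega)]
      have := hwE hF
      simpa using this
    · rw [ev1 0 hF]
      exact hwF hF
  · -- last = i
    show (F ++ π.verts.drop t)[(ds ++ π.dirs.drop t).length]'_ = i
    rw [gidx _ heslen, ev2 (π.dirs.length - t) (by omega)]
    have e2 : t + (π.dirs.length - t) = π.dirs.length := by omega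
    rw [← hπi]
    show π.verts[t + (π.dirs.length - t)]'_ = π.verts[π.dirs.length]'(by omega)
    congr 1 <;> omega
  · -- backdoor first edge
    refine ⟨by rw [heslen]; omega, ?_⟩
    show (ds ++ π.dirs.drop t)[0]'_ = .bwd ∨ (ds ++ π.dirs.drop t)[0]'_ = .bi
    rcases Nat.eq_zero_or_pos F.length with hF | hF
    · have htn : t < π.dirs.length := by rcases hne with h | h; omega; exact h
      rw [gidx _ (show (0:ℕ) = F.length + 0 by omega), ee2 0 (by omega)]
      have := hbdE hF htn
      simpa using this
    · rw [ee1 0 (by omega)]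
      left
      exact hbdF hF
  · -- not blocked
    rw [notBlocks_iff]
    intro k hk h
    have hes : k < F.length + (π.dirs.length - t) := by rw [heslen] at h; omega
    have hcoll : ∀ k' (hh : k' < (ds ++ π.dirs.drop t).length),
        (GPath.ColliderAt ⟨F ++ π.verts.drop t, ds ++ π.dirs.drop t, hlen', hnd,
          fun k h => by simpa [List.get_eq_getElem] using hok k h⟩ k') ↔ CC (ds ++ π.dirs.drop t) k' :=
      fun k' hh => colliderAt_iff _ k'
    rcases Nat.lt_or_ge k F.length with h1 | h1
    · -- in F part: non-collider, not in Z
      have hncc : ¬ CC (ds ++ π.dirs.drop t) k := by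
        rintro ⟨hc1, hc2, hc3, hc4⟩
        rcases (hH1 k hk h1).1 with hb | hb
        · rw [ee1 (k-1) (by omega)] at hc3
          have e : ds[k-1]'(by omega) = ds[k-1]'(by omega) := rfl
          rcases hc3 with hc3 | hc3 <;> rw [hc3] at hb <;> simp at hb
        · rw [ee1 k (by omega)] at hc4
          rcases hc4 with hc4 | hc4 <;> rw [hc4] at hb <;> simp at hb
      constructor
      · intro _ hmem
        rw [ev1 k h1] at hmem
        exact (hH1 k hk h1).2 hmem
      · intro hc
        exact absurd ((hcoll k h).1 hc) hncc
    · rcases Nat.eq_or_lt_of_le h1 with hkF | hkF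
      · -- junction: k = F.length
        have hF : 0 < F.length := by omega
        have htn : t < π.dirs.length := by omega
        have eL : (ds ++ π.dirs.drop t)[k-1]'(by rw [heslen]; omega)
            = ds[F.length - 1]'(by omega) := by
          rw [ee1 (k-1) (by omega)]
          congr 1
          omega
        have eR : (ds ++ π.dirs.drop t)[k]'(by rw [heslen]; omega) = π.dirs[t]'htn := by
          rw [gidx _ (show k = F.length + 0 by omega), ee2 0 (by omega)]
          congr 1
        have evk : (F ++ π.verts.drop t)[k]'(by rw [hvslen]; omega)
            = π.verts[t]'(by omega) := by
          rw [gidx _ (show k = F.length + 0 by omega), ev2 0 (by omega)]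
          congr 1
        constructor
        · intro hnc hmem
          rw [evk] at hmem
          obtain ⟨hd, hnb⟩ := (hJ hF htn).2 hmem
          refine hnc ((hcoll k h).2 ?_)
          refine ⟨hk, by rw [heslen]; omega, ?_, ?_⟩
          · rw [eL]
            cases hds : ds[F.length - 1]'(by omega) with
            | fwd => left; rfl
            | bwd => exact absurd hds hnb
            | bi => right; rfl
          · rw [eR]
            exact hd
        · intro hc
          obtain ⟨hc1, hc2, hc3, hc4⟩ := (hcoll k h).1 hc
          rw [eL] at hc3
          rw [eR] at hc4
          have hnb : ds[F.length - 1]'(by omega) ≠ .bwd := by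
            rcases hc3 with hc3 | hc3 <;> rw [hc3] <;> simp
          rw [evk]
          exact (hJ hF htn).1 hc4 hnb
      · -- π tail part: k > F.length
        have hs1 : t < t + (k - F.length) := by omega
        have hs2 : t + (k - F.length) < π.dirs.length := by omega
        have eL : (ds ++ π.dirs.drop t)[k-1]'(by rw [heslen]; omega)
            = π.dirs[t + (k - F.length) - 1]'(by omega) := by
          rw [gidx _ (show k - 1 = F.length + (k - 1 - F.length) by omega),
            ee2 (k - 1 - F.length) (by omega)]
          congr 1
          omega
        have eR : (ds ++ π.dirs.drop t)[k]'(by rw [heslen]; omega)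
            = π.dirs[t + (k - F.length)]'hs2 := by
          rw [gidx _ (show k = F.length + (k - F.length) by omega),
            ee2 (k - F.length) (by omega)]
        have evk : (F ++ π.verts.drop t)[k]'(by rw [hvslen]; omega)
            = π.verts[t + (k - F.length)]'(by omega) := by
          rw [gidx _ (show k = F.length + (k - F.length) by omega),
            ev2 (k - F.length) (by omega)]
        have hiff : CC (ds ++ π.dirs.drop t) k ↔ π.ColliderAt (t + (k - F.length)) := by
          rw [colliderAt_iff]
          constructor
          · rintro ⟨hc1, hc2, hc3, hc4⟩
            rw [eL] at hc3
            rw [eR] at hc4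
            exact ⟨by omega, hs2, hc3, hc4⟩
          · rintro ⟨hc1, hc2, hc3, hc4⟩
            refine ⟨by omega, by rw [heslen]; omega, ?_, ?_⟩
            · rw [eL]
              convert hc3 using 2
            · rw [eR]
              convert hc4 using 2
        constructor
        · intro hnc hmem
          rw [evk] at hmem
          refine (hH3 (t + (k - F.length)) hs1 hs2).2 ?_ hmem
          intro hcol
          exact hnc ((hcoll k h).2 (hiff.2 hcol))
        · intro hc
          rw [evk]
          exact (hH3 (t + (k - F.length)) hs1 hs2).1 (hiff.1 ((hcoll k h).1 hc))

lemma tail_glue (Z : Set V) (w i : V) (π : G.GPath) (hπi : π.last = i)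
    (t : ℕ) (ht0 : 0 < t) (htn : t < π.dirs.length)
    (hwt : π.verts[t]'(by have := π.hlen; omega) = w)
    (hbd : π.dirs[t]'htn = .bwd ∨ π.dirs[t]'htn = .bi)
    (hH3 : ∀ s, t < s → ∀ hs : s < π.dirs.length,
      (π.ColliderAt s → AnStar G Z (π.verts[s]'(by have := π.hlen; omega))) ∧
      (¬ π.ColliderAt s → (π.verts[s]'(by have := π.hlen; omega)) ∉ Z)) :
    ∃ σ : G.GPath, σ.IsBackdoor w i ∧ ¬ Blocks Z σ := by
  refine glue Z w i π hπi t (le_of_lt htn) [] [] rfl ?_ ?_ ?_ ?_ hH3 ?_ ?_ ?_ ?_ ?_ ?_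
  · intro j hj; simp at hj
  · intro h; simp at h
  · intro j hj hjl; simp at hjl
  · intro h; simp at h
  · intro h; simp at h
  · intro _; exact hwt
  · intro h; simp at h
  · intro _ htn'; exact hbd
  · exact Or.inr htn
  · simp only [List.nil_append]
    exact (List.drop_sublist t π.verts).nodup π.nodup

lemma interior_S_collider (S : Set V) (u : V) (π : G.GPath) (hπnb : ¬ Blocks (S \ {u}) π)
    (t : ℕ) (ht0 : 0 < t) (htn : t < π.dirs.length)
    (hmem : π.verts[t]'(by have := π.hlen; omega) ∈ S)
    (hne : π.verts[t]'(by have := π.hlen; omega) ≠ u) :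
    π.dirs[t]'htn = .bwd ∨ π.dirs[t]'htn = .bi := by
  have H := (notBlocks_iff (S \ {u}) π).1 hπnb t ht0 htn
  by_cases hc : π.ColliderAt t
  · obtain ⟨_, _, _, h4⟩ := (colliderAt_iff π t).1 hc
    exact h4
  · refine absurd (H.1 hc) ?_
    simp only [Set.mem_diff, Set.mem_singleton_iff, not_not]
    exact ⟨hmem, hne⟩

lemma greatest_pos (P : ℕ → Prop) (n : ℕ) (hex : ∃ m, m ≤ n ∧ P m)
    (hbound : ∀ k, P k → k ≤ n) :
    ∃ t, t ≤ n ∧ P t ∧ ∀ s, t < s → ¬ P s := by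
  classical
  obtain ⟨m, hm, hPm⟩ := hex
  refine ⟨Nat.findGreatest P n, Nat.findGreatest_le n, Nat.findGreatest_spec hm hPm, ?_⟩
  intro s hs hPs
  exact Nat.findGreatest_is_greatest hs (hbound s hPs) hPs

lemma first_S (p : G.GPath) (S : Set V)
    (hS : p.verts[p.dirs.length]'(by have := p.hlen; omega) ∈ S)
    (h0 : p.verts[0]'(by have := p.hlen; omega) ∉ S) :
    ∃ j, ∃ _hj : j ≤ p.dirs.length, 0 < j ∧ p.verts[j]'(by have := p.hlen; omega) ∈ S ∧
      ∀ k, k < j → ∀ hk : k < p.verts.length, p.verts[k]'hk ∉ S := by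
  classical
  have hplen := p.hlen
  have hex : ∃ j, ∃ hj : j < p.verts.length, p.verts[j]'hj ∈ S :=
    ⟨p.dirs.length, by omega, hS⟩
  obtain ⟨hjlt, hjS⟩ := Nat.find_spec hex
  refine ⟨Nat.find hex, ?_, ?_, hjS, ?_⟩
  · exact Nat.find_min' hex ⟨by omega, hS⟩
  · rcases Nat.eq_zero_or_pos (Nat.find hex) with h | h
    · exfalso
      apply h0
      have : p.verts[Nat.find hex]'hjlt = p.verts[0]'(by omega) := by
        rw [gidx _ h]
      rw [← this]
      exact hjS
    · exact h
  · intro k hk hklt hmem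
    exact Nat.find_min hex hk ⟨hklt, hmem⟩

end ADMG
set_option maxHeartbeats 8000000 in


open ADMG in
/-- treks out of a common source `l ∉ S` connecting `S₂` to `S₁`, with the
branch to `S₂` unblocked by `S₁` and the branch to `S₁` unblocked by `S₂`, are
impossible. -/
theorem no_trek_from_S2_to_S1 {V : Type} (G : ADMG V) (i : V) (S : Set V) (hiS : i ∉ S)
    (S₁ S₂ : Set V)
    (hS₁ : S₁ = {k ∈ S | ∃ p : G.GPath, p.IsBackdoor k i ∧ ¬ Blocks (S \ {k}) p})
    (hS₂ : S₂ = S \ S₁)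
    (xp xq : V) (hp : xp ∈ S₁) (hq : xq ∈ S₂) :
    ¬ ∃ (l : V) (p₁ p₂ : G.GPath), l ∉ S ∧
        p₁.IsDirected l xq ∧ ¬ Blocks S₁ p₁ ∧
        p₂.IsDirected l xp ∧ ¬ Blocks S₂ p₂ ∧
        (∀ v, v ∈ p₁.verts → v ∈ p₂.verts → v = l) := by
  classical
  rintro ⟨l, p₁, p₂, hlS, hd₁, hnb₁, hd₂, hnb₂, hmeet⟩
  obtain ⟨hf₁, hl₁, hne₁, hfwd₁⟩ := hd₁
  obtain ⟨hf₂, hl₂, hne₂, hfwd₂⟩ := hd₂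
  have hplen₁ := p₁.hlen
  have hplen₂ := p₂.hlen
  have hd₁pos : 0 < p₁.dirs.length := List.length_pos_iff.2 hne₁
  have hd₂pos : 0 < p₂.dirs.length := List.length_pos_iff.2 hne₂
  have hq' : xq ∈ S ∧ xq ∉ S₁ := by rw [hS₂] at hq; exact hq
  have hp' : xp ∈ S := by rw [hS₁] at hp; exact hp.1
  have hlast₁ : p₁.verts[p₁.dirs.length]'(by omega) = xq := hl₁
  have hfirst₁ : p₁.verts[0]'(by omega) = l := hf₁
  have hlast₂ : p₂.verts[p₂.dirs.length]'(by omega) = xp := hl₂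
  have hfirst₂ : p₂.verts[0]'(by omega) = l := hf₂
  obtain ⟨j₁, hj₁le, hj₁0, hj₁S, hj₁min⟩ := first_S p₁ S (by rw [hlast₁]; exact hq'.1)
    (by rw [hfirst₁]; exact hlS)
  obtain ⟨j₂, hj₂le, hj₂0, hj₂S, hj₂min⟩ := first_S p₂ S (by rw [hlast₂]; exact hp')
    (by rw [hfirst₂]; exact hlS)
  -- w and u
  have hwS : p₁.verts[j₁]'(by omega) ∈ S := hj₁S
  have huS : p₂.verts[j₂]'(by omega) ∈ S := hj₂S
  have hwl : p₁.verts[j₁]'(by omega) ≠ l := fun h => hlS (h ▸ hwS)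
  have hul : p₂.verts[j₂]'(by omega) ≠ l := fun h => hlS (h ▸ huS)
  have hwmem₁ : p₁.verts[j₁]'(by omega) ∈ p₁.verts := List.getElem_mem _
  have humem₂ : p₂.verts[j₂]'(by omega) ∈ p₂.verts := List.getElem_mem _
  have hwnp₂ : p₁.verts[j₁]'(by omega) ∉ p₂.verts := fun h => hwl (hmeet _ hwmem₁ h)
  have hwu : p₁.verts[j₁]'(by omega) ≠ p₂.verts[j₂]'(by omega) := by
    intro h
    exact hwnp₂ (h ▸ humem₂)
  have hwi : p₁.verts[j₁]'(by omega) ≠ i := fun h => hiS (h ▸ hwS)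
  -- w ∉ S₁
  have hwnotS₁ : p₁.verts[j₁]'(by omega) ∉ S₁ := by
    rcases Nat.eq_or_lt_of_le hj₁le with heq | hlt
    · have e : p₁.verts[j₁]'(by omega) = p₁.verts[p₁.dirs.length]'(by omega) := by
        rw [gidx _ heq]
      rw [e, hlast₁]
      exact hq'.2
    · have hnc : ¬ p₁.ColliderAt j₁ := by
        rw [colliderAt_iff]
        rintro ⟨h1, h2, h3, h4⟩
        have hf := hfwd₁ j₁ h2
        simp only [List.get_eq_getElem] at hf
        rcases h4 with h4 | h4 <;> rw [hf] at h4 <;> simp at h4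
      exact ((notBlocks_iff S₁ p₁).1 hnb₁ j₁ hj₁0 hlt).1 hnc
  -- u ∈ S₁
  have huS₁ : p₂.verts[j₂]'(by omega) ∈ S₁ := by
    rcases Nat.eq_or_lt_of_le hj₂le with heq | hlt
    · have e : p₂.verts[j₂]'(by omega) = p₂.verts[p₂.dirs.length]'(by omega) := by
        rw [gidx _ heq]
      rw [e, hlast₂]
      exact hp
    · have hnc : ¬ p₂.ColliderAt j₂ := by
        rw [colliderAt_iff]
        rintro ⟨h1, h2, h3, h4⟩
        have hf := hfwd₂ j₂ h2
        simp only [List.get_eq_getElem] at hf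
        rcases h4 with h4 | h4 <;> rw [hf] at h4 <;> simp at h4
      have hnotS₂ := ((notBlocks_iff S₂ p₂).1 hnb₂ j₂ hj₂0 hlt).1 hnc
      by_contra hcon
      exact hnotS₂ (by rw [hS₂]; exact ⟨huS, hcon⟩)
  -- get the backdoor path of u
  rw [hS₁] at huS₁
  obtain ⟨huS'', π, hπbd, hπnb⟩ := huS₁
  obtain ⟨hπf, hπl, hπd0, hπbd0⟩ := hπbd
  have hπlen := π.hlen
  have hπv0 : π.verts[0]'(by omega) = p₂.verts[j₂]'(by omega) := hπf
  have Hπ := (notBlocks_iff (S \ {p₂.verts[j₂]'(by omega)}) π).1 hπnb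
  have hnu : ∀ s, 0 < s → ∀ hs : s < π.verts.length,
      π.verts[s]'hs ≠ p₂.verts[j₂]'(by omega) := by
    intro s hs0 hs heq
    exact gpath_ne_get hs (by omega) (by omega) (heq.trans hπv0.symm)
  have hπnc' : ∀ s, 0 < s → ∀ hs : s < π.dirs.length, ¬ π.ColliderAt s →
      π.verts[s]'(by omega) ∉ S := by
    intro s hs0 hs hnc hmem
    apply (Hπ s hs0 hs).1 hnc
    exact ⟨hmem, hnu s hs0 (by omega)⟩
  -- suffices: an open backdoor path from w
  suffices hcon : ∃ σ : G.GPath, σ.IsBackdoor (p₁.verts[j₁]'(by omega)) i ∧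
      ¬ Blocks (S \ {p₁.verts[j₁]'(by omega)}) σ by
    apply hwnotS₁
    rw [hS₁]
    exact ⟨hwS, hcon⟩
  by_cases hbad : ∃ s, ∃ hs : s < π.dirs.length, π.ColliderAt s ∧
      ¬ AnStar G (S \ {p₁.verts[j₁]'(by omega)}) (π.verts[s]'(by omega))
  · -- CASE: bad collider exists
    obtain ⟨t₀, ht₀, ht₀P⟩ := hbad
    obtain ⟨ts, htsle, ⟨hts, htcol, htnA⟩, htmax⟩ := greatest_pos
      (fun s => ∃ hs : s < π.dirs.length, π.ColliderAt s ∧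
        ¬ AnStar G (S \ {p₁.verts[j₁]'(by omega)}) (π.verts[s]'(by omega)))
      π.dirs.length ⟨t₀, by omega, ht₀, ht₀P⟩ (fun k hk => by obtain ⟨hk', _⟩ := hk; omega)
    have htpos : 0 < ts := by
      obtain ⟨h1, _, _, _⟩ := (colliderAt_iff π ts).1 htcol
      exact h1
    have H3geq : ∀ (t : ℕ), ts ≤ t → ∀ s, t < s → ∀ hs : s < π.dirs.length,
        (π.ColliderAt s → AnStar G (S \ {p₁.verts[j₁]'(by omega)}) (π.verts[s]'(by omega))) ∧
        (¬ π.ColliderAt s → (π.verts[s]'(by omega)) ∉ (S \ {p₁.verts[j₁]'(by omega)})) := by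
      intro t htt s hts' hs
      constructor
      · intro hcol
        by_contra hnA
        exact htmax s (by omega) ⟨hs, hcol, hnA⟩
      · intro hnc hmem
        exact hπnc' s (by omega) hs hnc hmem.1
    by_cases hcw : π.verts[ts]'(by omega) = p₁.verts[j₁]'(by omega)
    · have hbdts : π.dirs[ts]'hts = .bwd ∨ π.dirs[ts]'hts = .bi := by
        obtain ⟨_, h2, _, h4⟩ := (colliderAt_iff π ts).1 htcol
        exact h4
      exact tail_glue _ _ i π hπl ts htpos hts hcw hbdts (H3geq ts le_rfl)
    · -- β construction: descend from c to w
      have hnA' : (π.verts[ts]'(by omega)) ∉ (S \ {p₁.verts[j₁]'(by omega)}) ∧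
          ∀ d, Desc G (π.verts[ts]'(by omega)) d → d ∉ (S \ {p₁.verts[j₁]'(by omega)}) := by
        unfold AnStar at htnA
        push_neg at htnA
        exact htnA
      have hdesc : Desc G (π.verts[ts]'(by omega)) (p₁.verts[j₁]'(by omega)) := by
        rcases (Hπ ts htpos hts).2 htcol with hin | ⟨d, hd, hdin⟩
        · exact absurd (⟨hin.1, hcw⟩ : _ ∈ S \ {p₁.verts[j₁]'(by omega)}) hnA'.1
        · have hdw : d = p₁.verts[j₁]'(by omega) := by
            by_contra hne
            exact hnA'.2 d hd ⟨hdin.1, hne⟩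
          rw [← hdw]
          exact hd
      obtain ⟨m, hml2, hm0, hmlast, hmchain, hmnd⟩ := desc_to_path hdesc hcw
      have hmne : m ≠ [] := by intro h; rw [h] at hml2; simp at hml2
      have hmmem : ∀ v ∈ m, v ∉ (S \ {p₁.verts[j₁]'(by omega)}) := by
        intro v hv
        rcases chain_desc m hmchain hmne v hv with h | h
        · rw [h, hm0]; exact hnA'.1
        · rw [hm0] at h
          exact hnA'.2 v h
      have hdropeq : ∀ k (hk : k < (π.verts.drop ts).length),
          (π.verts.drop ts)[k]'hk = π.verts[ts + k]'(by simp only [List.length_drop] at hk; omega) := by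
        intro k hk
        simp only [List.getElem_drop]
      have hQ0 : ∃ hj : (0:ℕ) < m.length, m[0]'hj ∈ π.verts.drop ts := by
        refine ⟨by omega, ?_⟩
        rw [hm0]
        have h0 : (π.verts.drop ts)[0]'(by simp only [List.length_drop]; omega)
            = π.verts[ts]'(by omega) := by
          rw [hdropeq 0 (by simp only [List.length_drop]; omega)]
          congr 1
        rw [← h0]
        exact List.getElem_mem _
      obtain ⟨jx, hjxle, hjxP, hjxmax⟩ := greatest_pos
        (fun jj => ∃ hj : jj < m.length, m[jj]'hj ∈ π.verts.drop ts) (m.length - 1)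
        ⟨0, by omega, hQ0⟩ (fun k hk => by obtain ⟨hk', _⟩ := hk; omega)
      obtain ⟨hjxlt, hxmem⟩ := hjxP
      obtain ⟨k₀, hk₀, hk₀eq⟩ := List.getElem_of_mem hxmem
      have hk₀' : ts + k₀ < π.verts.length := by
        simp only [List.length_drop] at hk₀; omega
      have hteq : π.verts[ts + k₀]'hk₀' = m[jx]'hjxlt := by
        rw [← hk₀eq, hdropeq k₀ hk₀]
      have htle : ts + k₀ ≤ π.dirs.length := by omega
      by_cases hjxtop : jx = m.length - 1
      · -- x = w : w lies on π at position ts + k₀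
        have hwt : π.verts[ts + k₀]'(by omega) = p₁.verts[j₁]'(by omega) := by
          rw [hteq, gidx _ hjxtop]
          exact hmlast
        have ht0 : 0 < ts + k₀ := by omega
        have htn : ts + k₀ < π.dirs.length := by
          rcases Nat.lt_or_ge (ts + k₀) π.dirs.length with h | h
          · exact h
          · exfalso
            apply hwi
            rw [← hwt, ← hπl]
            show π.verts[ts + k₀]'(by omega) = π.verts[π.dirs.length]'(by omega)
            congr 1 <;> omega
        have hbdw := interior_S_collider S (p₂.verts[j₂]'(by omega)) π hπnb (ts + k₀) ht0 htn
          (by rw [hwt]; exact hwS) (by rw [hwt]; exact hwu)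
        exact tail_glue _ _ i π hπl (ts + k₀) ht0 htn hwt hbdw (H3geq (ts + k₀) (by omega))
      · -- proper reversed-chain prefix
        have hjxlt' : jx < m.length - 1 := by omega
        have hFlen : ((m.drop (jx+1)).reverse).length = m.length - 1 - jx := by
          simp only [List.length_reverse, List.length_drop]; omega
        have hFget : ∀ jj (hj : jj < m.length - 1 - jx),
            ((m.drop (jx+1)).reverse)[jj]'(by rw [hFlen]; omega)
              = m[m.length - 1 - jj]'(by omega) := by
          intro jj hj
          rw [List.getElem_reverse]
          simp only [List.getElem_drop]
          congr 1
          simp only [List.length_drop]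
          omega
        refine glue (S \ {p₁.verts[j₁]'(by omega)}) (p₁.verts[j₁]'(by omega)) i π hπl
          (ts + k₀) htle ((m.drop (jx+1)).reverse) (List.replicate (m.length - 1 - jx) .bwd)
          (by rw [hFlen]; simp) ?_ ?_ ?_ ?_ (H3geq (ts + k₀) (by omega)) ?_ ?_ ?_ ?_ ?_ ?_
        · -- hstep
          intro j hj
          rw [List.getElem_replicate]
          rw [hFget j (by rw [hFlen] at hj; omega), hFget (j+1) (by rw [hFlen] at hj; omega)]
          show G.dir (m[m.length - 1 - (j+1)]'(by omega)) (m[m.length - 1 - j]'(by omega))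
          have hc := (chain'_iff_getElem' G.dir m).1 hmchain (m.length - 2 - j)
            (by rw [hFlen] at hj; omega)
          rw [gidx m (show m.length - 1 - (j+1) = m.length - 2 - j by rw [hFlen] at hj; omega)]
          rw [gidx m (show m.length - 1 - j = (m.length - 2 - j) + 1 by rw [hFlen] at hj; omega)]
          exact hc
        · -- hstepLast
          intro hF
          rw [List.getElem_replicate]
          rw [hFget (((m.drop (jx+1)).reverse).length - 1) (by rw [hFlen]; rw [hFlen] at hF; omega)]
          show G.dir (π.verts[ts + k₀]'(by omega))
            (m[m.length - 1 - (((m.drop (jx+1)).reverse).length - 1)]'(by omega))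
          rw [hteq]
          have hc := (chain'_iff_getElem' G.dir m).1 hmchain jx (by omega)
          rw [gidx m (show m.length - 1 - (((m.drop (jx+1)).reverse).length - 1) = jx + 1 by
            rw [hFlen]; omega)]
          exact hc
        · -- hH1
          intro j hj0 hj
          constructor
          · left
            exact List.getElem_replicate ..
          · rw [hFget j (by rw [hFlen] at hj; omega)]
            exact hmmem _ (List.getElem_mem _)
        · -- hJ
          intro hF htn
          constructor
          · intro _ hnb
            exact absurd (List.getElem_replicate ..) hnb
          · intro hmem
            exfalso
            rw [hteq] at hmem
            exact hmmem _ (List.getElem_mem _) hmem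
        · -- hwF
          intro hF
          rw [hFget 0 (by rw [hFlen] at hF; omega)]
          rw [gidx m (show m.length - 1 - 0 = m.length - 1 by omega)]
          exact hmlast
        · -- hwE
          intro hE
          exfalso
          rw [hFlen] at hE
          omega
        · -- hbdF
          intro hF
          exact List.getElem_replicate ..
        · -- hbdE
          intro hE
          exfalso
          rw [hFlen] at hE
          omega
        · -- hne
          left
          rw [hFlen]
          omega
        · -- nodup
          rw [List.nodup_append]
          refine ⟨List.nodup_reverse.2 ((List.drop_sublist _ _).nodup hmnd),
            (List.drop_sublist _ _).nodup π.nodup, ?_⟩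
          intro v hvF w hvD hvw
          rw [← hvw] at hvD
          rw [List.mem_reverse] at hvF
          obtain ⟨a, ha, haeq⟩ := List.getElem_of_mem hvF
          have hvD' : v ∈ π.verts.drop ts := by
            have hvD2 : v ∈ List.drop k₀ (List.drop ts π.verts) := by
              rw [List.drop_drop]
              first
              | exact hvD
              | (rw [show k₀ + ts = ts + k₀ by omega]; exact hvD)
            exact List.mem_of_mem_drop hvD2
          have hbound : jx + 1 + a < m.length := by
            simp only [List.length_drop] at ha; omega
          apply hjxmax (jx + 1 + a) (by omega)
          refine ⟨hbound, ?_⟩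
          have heq2 : (m.drop (jx+1))[a]'ha = m[jx + 1 + a]'hbound := by
            simp only [List.getElem_drop]
          rw [← heq2, haeq]
          exact hvD'
  · -- CASE: no bad collider
    push_neg at hbad
    have H3all : ∀ s, 0 < s → ∀ hs : s < π.dirs.length,
        (π.ColliderAt s → AnStar G (S \ {p₁.verts[j₁]'(by omega)}) (π.verts[s]'(by omega))) ∧
        (¬ π.ColliderAt s → (π.verts[s]'(by omega)) ∉ (S \ {p₁.verts[j₁]'(by omega)})) := by
      intro s hs0 hs
      refine ⟨fun hcol => ?_, fun hnc hmem => hπnc' s hs0 hs hnc hmem.1⟩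
      by_contra hnA
      exact hnA (hbad s hs hcol)
    by_cases hwπ : p₁.verts[j₁]'(by omega) ∈ π.verts
    · obtain ⟨tw, htw, htweq⟩ := List.getElem_of_mem hwπ
      have htw0 : 0 < tw := by
        rcases Nat.eq_zero_or_pos tw with h | h
        · exfalso
          apply hwu
          rw [← htweq, ← hπv0]
          congr 1 <;> omega
        · exact h
      have htwn : tw < π.dirs.length := by
        rcases Nat.lt_or_ge tw π.dirs.length with h | h
        · exact h
        · exfalso
          apply hwi
          rw [← htweq, ← hπl]
          show π.verts[tw]'htw = π.verts[π.dirs.length]'(by omega)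
          congr 1 <;> omega
      have hbdw := interior_S_collider S (p₂.verts[j₂]'(by omega)) π hπnb tw htw0 htwn
        (by rw [htweq]; exact hwS) (by rw [htweq]; exact hwu)
      exact tail_glue _ _ i π hπl tw htw0 htwn htweq hbdw
        (fun s hs' hs => H3all s (by omega) hs)
    · -- γ construction: glue the trek onto π
      have hπn : π.verts.length = π.dirs.length + 1 := π.hlen
      -- the trek list: reverse of p₁ up to j₁, then p₂ from 1 to j₂
      have hAlen : ((p₁.verts.take (j₁+1)).reverse).length = j₁ + 1 := by
        simp only [List.length_reverse, List.length_take]; omega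
      have hBlen : (((p₂.verts.take (j₂+1)).drop 1)).length = j₂ := by
        simp only [List.length_drop, List.length_take]; omega
      have hvsRlen : ((p₁.verts.take (j₁+1)).reverse ++ ((p₂.verts.take (j₂+1)).drop 1)).length
          = j₁ + 1 + j₂ := by
        simp only [List.length_append]; omega
      have hR1 : ∀ k (hk : k ≤ j₁),
          ((p₁.verts.take (j₁+1)).reverse ++ ((p₂.verts.take (j₂+1)).drop 1))[k]'(by omega)
            = p₁.verts[j₁ - k]'(by omega) := by
        intro k hk
        rw [List.getElem_append_left (by rw [hAlen]; omega)]
        rw [List.getElem_reverse]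
        simp only [List.getElem_take]
        congr 1
        simp only [List.length_take]
        omega
      have hR2 : ∀ k, j₁ ≤ k → ∀ hk : k < j₁ + 1 + j₂,
          ((p₁.verts.take (j₁+1)).reverse ++ ((p₂.verts.take (j₂+1)).drop 1))[k]'(by omega)
            = p₂.verts[k - j₁]'(by omega) := by
        intro k hk1 hk
        rcases Nat.eq_or_lt_of_le hk1 with heq | hlt
        · rw [hR1 k (by omega)]
          have e1 : p₁.verts[j₁ - k]'(by omega) = p₁.verts[0]'(by omega) := by
            congr 1; omega
          have e2 : p₂.verts[k - j₁]'(by omega) = p₂.verts[0]'(by omega) := by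
            congr 1; omega
          rw [e1, e2, hfirst₁, hfirst₂]
        · rw [List.getElem_append_right (by rw [hAlen]; omega)]
          simp only [List.getElem_drop, List.getElem_take]
          congr 1
          rw [hAlen]
          omega
      have hBmem : ∀ v ∈ (p₂.verts.take (j₂+1)).drop 1, v ≠ l := by
        intro v hv
        obtain ⟨a, ha, haeq⟩ := List.getElem_of_mem hv
        have ha' : a < j₂ := by rw [hBlen] at ha; omega
        have hvp : v = p₂.verts[a+1]'(by omega) := by
          rw [← haeq]
          simp only [List.getElem_drop, List.getElem_take]
          congr 1
          omega
        rw [hvp, ← hfirst₂]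
        exact gpath_ne_get (by omega) (by omega) (by omega)
      have hRnodup : ((p₁.verts.take (j₁+1)).reverse ++ ((p₂.verts.take (j₂+1)).drop 1)).Nodup := by
        rw [List.nodup_append]
        refine ⟨List.nodup_reverse.2 ((List.take_sublist _ _).nodup p₁.nodup),
          ((List.drop_sublist _ _).nodup ((List.take_sublist _ _).nodup p₂.nodup)), ?_⟩
        intro v hvA w hvB hvw
        rw [← hvw] at hvB
        rw [List.mem_reverse] at hvA
        have hv1 : v ∈ p₁.verts := List.mem_of_mem_take hvA
        have hv2 : v ∈ p₂.verts := List.mem_of_mem_take (List.mem_of_mem_drop hvB)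
        exact hBmem v hvB (hmeet v hv1 hv2)
      -- greatest position of π on the trek
      have hQ0 : ∃ h : (0:ℕ) < π.verts.length, π.verts[0]'h ∈
          ((p₁.verts.take (j₁+1)).reverse ++ ((p₂.verts.take (j₂+1)).drop 1)) := by
        refine ⟨by omega, ?_⟩
        rw [hπv0]
        have e : p₂.verts[j₂]'(by omega) =
            ((p₁.verts.take (j₁+1)).reverse ++ ((p₂.verts.take (j₂+1)).drop 1))[j₁ + j₂]'(by omega) := by
          rw [hR2 (j₁ + j₂) (by omega) (by omega)]
          congr 1
          omega
        rw [e]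
        exact List.getElem_mem _
      obtain ⟨t, htle, htP, htmax⟩ := greatest_pos
        (fun t' => ∃ h : t' < π.verts.length, π.verts[t']'h ∈
          ((p₁.verts.take (j₁+1)).reverse ++ ((p₂.verts.take (j₂+1)).drop 1)))
        π.dirs.length ⟨0, by omega, hQ0⟩ (fun k hk => by obtain ⟨hk', _⟩ := hk; omega)
      obtain ⟨htlt, hymem⟩ := htP
      obtain ⟨ρ, hρ, hρeq⟩ := List.getElem_of_mem hymem
      have hρlt : ρ < j₁ + 1 + j₂ := by rw [hvsRlen] at hρ; omega
      have hρ0 : 0 < ρ := by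
        rcases Nat.eq_zero_or_pos ρ with h | h
        · exfalso
          apply hwπ
          have e : ((p₁.verts.take (j₁+1)).reverse ++ ((p₂.verts.take (j₂+1)).drop 1))[ρ]'hρ
              = p₁.verts[j₁]'(by omega) := by
            rw [gidx _ h, hR1 0 (by omega)]
            congr 1
          rw [← e, hρeq]
          exact List.getElem_mem _
        · exact h
      have hρle : ρ ≤ j₁ + j₂ := by omega
      -- ds facts
      have hdslen : ((List.replicate j₁ EdgeDir.bwd ++ List.replicate j₂ EdgeDir.fwd).take ρ).length
          = ρ := by
        simp only [List.length_take, List.length_append, List.length_replicate]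
        omega
      have hFlen : ((((p₁.verts.take (j₁+1)).reverse ++ ((p₂.verts.take (j₂+1)).drop 1))).take ρ).length
          = ρ := by
        simp only [List.length_take]
        omega
      have hFget : ∀ k (hk : k < ρ),
          ((((p₁.verts.take (j₁+1)).reverse ++ ((p₂.verts.take (j₂+1)).drop 1))).take ρ)[k]'(by omega)
            = ((p₁.verts.take (j₁+1)).reverse ++ ((p₂.verts.take (j₂+1)).drop 1))[k]'(by omega) := by
        intro k hk
        simp only [List.getElem_take]
      have hdsget1 : ∀ k, k < j₁ → ∀ hk : k < ρ,
          ((List.replicate j₁ EdgeDir.bwd ++ List.replicate j₂ EdgeDir.fwd).take ρ)[k]'(by omega)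
            = EdgeDir.bwd := by
        intro k hk1 hk
        simp only [List.getElem_take]
        rw [List.getElem_append_left (by simp only [List.length_replicate]; omega)]
        exact List.getElem_replicate ..
      have hdsget2 : ∀ k, j₁ ≤ k → ∀ hk : k < ρ,
          ((List.replicate j₁ EdgeDir.bwd ++ List.replicate j₂ EdgeDir.fwd).take ρ)[k]'(by omega)
            = EdgeDir.fwd := by
        intro k hk1 hk
        simp only [List.getElem_take]
        rw [List.getElem_append_right (by simp only [List.length_replicate]; omega)]
        exact List.getElem_replicate ..
      -- steps along the trek
      have hstepR : ∀ k, ∀ _hk : k + 1 ≤ ρ,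
          G.StepOK (((List.replicate j₁ EdgeDir.bwd ++ List.replicate j₂ EdgeDir.fwd).take ρ)[k]'(by omega))
            (((p₁.verts.take (j₁+1)).reverse ++ ((p₂.verts.take (j₂+1)).drop 1))[k]'(by omega))
            (((p₁.verts.take (j₁+1)).reverse ++ ((p₂.verts.take (j₂+1)).drop 1))[k+1]'(by omega)) := by
        intro k hk
        rcases Nat.lt_or_ge k j₁ with h1 | h1
        · rw [hdsget1 k h1 (by omega), hR1 k (by omega), hR1 (k+1) (by omega)]
          show G.dir (p₁.verts[j₁ - (k+1)]'(by omega)) (p₁.verts[j₁ - k]'(by omega))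
          have hok := p₁.ok (j₁ - (k+1)) (by omega)
          rw [hfwd₁ (j₁ - (k+1)) (by omega)] at hok
          simp only [List.get_eq_getElem] at hok
          rw [gidx p₁.verts (show j₁ - k = (j₁ - (k+1)) + 1 by omega)]
          exact hok
        · rw [hdsget2 k h1 (by omega), hR2 k h1 (by omega), hR2 (k+1) (by omega) (by omega)]
          show G.dir (p₂.verts[k - j₁]'(by omega)) (p₂.verts[k + 1 - j₁]'(by omega))
          have hok := p₂.ok (k - j₁) (by omega)
          rw [hfwd₂ (k - j₁) (by omega)] at hok
          simp only [List.get_eq_getElem] at hok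
          rw [gidx p₂.verts (show k + 1 - j₁ = (k - j₁) + 1 by omega)]
          exact hok
      refine glue (S \ {p₁.verts[j₁]'(by omega)}) (p₁.verts[j₁]'(by omega)) i π hπl
        t htle ((((p₁.verts.take (j₁+1)).reverse ++ ((p₂.verts.take (j₂+1)).drop 1))).take ρ)
        ((List.replicate j₁ EdgeDir.bwd ++ List.replicate j₂ EdgeDir.fwd).take ρ)
        (by rw [hdslen, hFlen]) ?_ ?_ ?_ ?_
        (fun s hs' hs => H3all s (by omega) hs) ?_ ?_ ?_ ?_ ?_ ?_
      · -- hstep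
        intro j hj
        rw [hFlen] at hj
        rw [hFget j (by omega), hFget (j+1) (by omega)]
        exact hstepR j (by omega)
      · -- hstepLast
        intro hF
        rw [hFlen] at hF
        have hFl1 : ((((p₁.verts.take (j₁+1)).reverse ++ ((p₂.verts.take (j₂+1)).drop 1))).take ρ).length - 1
            = ρ - 1 := by rw [hFlen]
        rw [gidx ((List.replicate j₁ EdgeDir.bwd ++ List.replicate j₂ EdgeDir.fwd).take ρ) hFl1]
        rw [gidx ((((p₁.verts.take (j₁+1)).reverse ++ ((p₂.verts.take (j₂+1)).drop 1))).take ρ) hFl1]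
        rw [hFget (ρ - 1) (by omega)]
        have e : π.verts[t]'(by omega) =
            ((p₁.verts.take (j₁+1)).reverse ++ ((p₂.verts.take (j₂+1)).drop 1))[(ρ-1)+1]'(by omega) := by
          rw [gidx _ (show ρ - 1 + 1 = ρ by omega), hρeq]
        rw [e]
        exact hstepR (ρ - 1) (by omega)
      · -- hH1
        intro j hj0 hj
        rw [hFlen] at hj
        constructor
        · rcases Nat.lt_or_ge (j-1) j₁ with h1 | h1
          · left
            exact hdsget1 (j-1) h1 (by omega)
          · right
            exact hdsget2 j (by omega) (by omega)
        · rw [hFget j (by omega)]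
          rcases le_or_gt j j₁ with h1 | h1
          · rw [hR1 j h1]
            intro hmem
            exact hj₁min (j₁ - j) (by omega) (by omega) hmem.1
          · rw [hR2 j (by omega) (by omega)]
            intro hmem
            exact hj₂min (j - j₁) (by omega) (by omega) hmem.1
      · -- hJ
        intro hF htn
        rw [hFlen] at hF
        have hFl1 : ((((p₁.verts.take (j₁+1)).reverse ++ ((p₂.verts.take (j₂+1)).drop 1))).take ρ).length - 1
            = ρ - 1 := by rw [hFlen]
        rw [gidx ((List.replicate j₁ EdgeDir.bwd ++ List.replicate j₂ EdgeDir.fwd).take ρ) hFl1]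
        constructor
        · intro hd hnb
          rcases Nat.lt_or_ge (ρ-1) j₁ with h1 | h1
          · exact absurd (hdsget1 (ρ-1) h1 (by omega)) hnb
          · have hyv : π.verts[t]'(by omega) = p₂.verts[ρ - j₁]'(by omega) := by
              rw [← hρeq, hR2 ρ (by omega) (by omega)]
            rcases Nat.eq_or_lt_of_le (show ρ - j₁ ≤ j₂ by omega) with heq | hlt
            · left
              rw [hyv]
              have e : p₂.verts[ρ - j₁]'(by omega) = p₂.verts[j₂]'(by omega) := by
                congr 1 <;> omega
              rw [e]
              exact ⟨huS, fun h => hwu h.symm⟩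
            · right
              refine ⟨p₂.verts[j₂]'(by omega), ?_, huS, fun h => hwu h.symm⟩
              rw [hyv]
              exact fwd_desc p₂ hfwd₂ hlt hj₂le
        · intro hmem
          rcases le_or_gt ρ j₁ with h1 | h1
          · exfalso
            have hyv : π.verts[t]'(by omega) = p₁.verts[j₁ - ρ]'(by omega) := by
              rw [← hρeq, hR1 ρ h1]
            rw [hyv] at hmem
            exact hj₁min (j₁ - ρ) (by omega) (by omega) hmem.1
          · rcases Nat.lt_or_ge (ρ - j₁) j₂ with h2 | h2
            · exfalso
              have hyv : π.verts[t]'(by omega) = p₂.verts[ρ - j₁]'(by omega) := by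
                rw [← hρeq, hR2 ρ (by omega) (by omega)]
              rw [hyv] at hmem
              exact hj₂min (ρ - j₁) (by omega) (by omega) hmem.1
            · -- the junction vertex is u itself, so t = 0 and the first edge of π is a backdoor edge
              have hyu : π.verts[t]'(by omega) = p₂.verts[j₂]'(by omega) := by
                rw [← hρeq, hR2 ρ (by omega) (by omega)]
                congr 1
                omega
              have ht0 : t = 0 := by
                by_contra hne0
                exact hnu t (by omega) (by omega) hyu
              refine ⟨?_, ?_⟩
              · have e : π.dirs[t]'htn = π.dirs[0]'(by omega) := by
                  rw [gidx π.dirs ht0]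
                rw [e]
                exact hπbd0
              · rw [hdsget2 (ρ-1) (by omega) (by omega)]
                simp
      · -- hwF
        intro hF
        rw [hFlen] at hF
        rw [hFget 0 (by omega), hR1 0 (by omega)]
        congr 1
      · -- hwE
        intro hE
        rw [hFlen] at hE
        omega
      · -- hbdF
        intro hF
        rw [hFlen] at hF
        exact hdsget1 0 (by omega) (by omega)
      · -- hbdE
        intro hE
        rw [hFlen] at hE
        omega
      · -- hne
        left
        rw [hFlen]
        omega
      · -- nodup
        rw [List.nodup_append]
        refine ⟨(List.take_sublist _ _).nodup hRnodup,
          (List.drop_sublist _ _).nodup π.nodup, ?_⟩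
        intro v hvF w hvD hvw
        rw [← hvw] at hvD
        obtain ⟨a, ha, haeq⟩ := List.getElem_of_mem hvF
        have ha' : a < ρ := by rw [hFlen] at ha; omega
        obtain ⟨b, hb, hbeq⟩ := List.getElem_of_mem hvD
        have hb' : t + b < π.verts.length := by
          simp only [List.length_drop] at hb; omega
        have hbv : π.verts[t + b]'hb' = v := by
          rw [← hbeq]
          simp only [List.getElem_drop]
        rcases Nat.eq_zero_or_pos b with hb0 | hb0
        · -- v = π.verts[t] = trek[ρ] but also trek[a] with a < ρ
          have e1 : π.verts[t + b]'hb' = π.verts[t]'(by omega) := by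
            congr 1; omega
          have e2 : ((p₁.verts.take (j₁+1)).reverse ++ ((p₂.verts.take (j₂+1)).drop 1))[a]'(by omega)
              = ((p₁.verts.take (j₁+1)).reverse ++ ((p₂.verts.take (j₂+1)).drop 1))[ρ]'hρ := by
            rw [hFget a ha'] at haeq
            rw [haeq, hρeq, ← e1, hbv]
          have := (List.Nodup.getElem_inj_iff hRnodup).1 e2
          omega
        · -- position t + b > t also meets the trek: contradicts maximality
          apply htmax (t + b) (by omega)
          refine ⟨hb', ?_⟩
          rw [hbv, ← haeq, hFget a ha']
          exact List.getElem_mem _
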